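/- Consider the convex problem: minimize Σ_{i=1}^N f_i(x_i) over (x_i, v_i, z_i) subject to A_i x_i − b_i = v_i and g_i(x_i) ≤ z_i for each i, Σ_i v_i = 0 and Σ_i z_i = 0, where each f_i : ℝ^{d_i} → ℝ is convex, each g_i : ℝ^{d_i} → ℝ^q is componentwise convex, and Slater's condition holds for the underlying coupled problem (there exists x̃ with Σ_i (A_i x̃_i − b_i) = 0 and Σ_i g_i(x̃_i) < 0). Then a feasible point (x*, v*, z*) is optimal if and only if there exist multipliers u_i* ∈ ℝ^p and y_i* ∈ ℝ^q for each i satisfying: (local conditions) 0 ∈ ∂f_i(x_i*) + A_iᵀ u_i* + Σ_{l=1}^q y_{il}* ∂g_{il}(x_i*), A_i x_i* − b_i − v_i* = 0, ⟨y_i*, g_i(x_i*) − z_i*⟩ = 0, y_i* ≥ 0, together with (global conditions) u_1* = u_2* = ⋯ = u_N*, y_1* = y_2* = ⋯ = y_N*, Σ_i v_i* = 0 and Σ_i z_i* = 0. -/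

import Mathlib

open RealInnerProductSpace Finset

/-- A vector `s` is a subgradient of `g` at `x` if `g y ≥ g x + ⟪s, y - x⟫` for all `y`. -/
def IsSubgradientAt {E : Type*} [NormedAddCommGroup E] [InnerProductSpace ℝ E]
    (g : E → ℝ) (s : E) (x : E) : Prop :=
  ∀ y, g y ≥ g x + ⟪s, y - x⟫

section KKTHelpers

set_option linter.unusedSectionVars false

lemma combo_lt {θ σ a b c e : ℝ} (hθ : 0 ≤ θ) (hσ : 0 ≤ σ) (hs : θ + σ = 1)
    (h1 : a < c) (h2 : b < e) : θ*a + σ*b < θ*c + σ*e := by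
  rcases eq_or_lt_of_le hθ with h | h
  · have : σ = 1 := by linarith
    subst this; rw [← h]; simpa using h2
  · nlinarith [mul_le_mul_of_nonneg_left h2.le hσ]

lemma nonneg_of_forall_pos_smul {μ c : ℝ} (h : ∀ r : ℝ, 0 < r → 0 < μ * r + c) :
    0 ≤ μ := by
  by_contra hμ
  push_neg at hμ
  have hne : μ ≠ 0 := ne_of_lt hμ
  rcases le_or_gt (c+1) 0 with h1 | h1
  · have := h 1 one_pos; linarith
  · have h2 := h ((c+1)/(-μ)) (div_pos h1 (by linarith))
    have h3 : μ * ((c+1)/(-μ)) = -(c+1) := by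
      rw [div_neg, mul_neg, ← mul_div_assoc, mul_div_cancel_left₀ _ hne]
    linarith

lemma nonneg_of_forall_pos_eps {a k : ℝ} (h : ∀ ε : ℝ, 0 < ε → 0 < a + ε * k) :
    0 ≤ a := by
  by_contra ha
  push_neg at ha
  rcases le_or_gt k 0 with h1 | h1
  · have := h 1 one_pos; nlinarith
  · have hk : k ≠ 0 := ne_of_gt h1
    have h2 := h (-a/(2*k)) (div_pos (by linarith) (by linarith))
    have h3 : (-a/(2*k)) * k = -a/2 := by
      rw [div_mul_eq_mul_div, mul_comm (2:ℝ) k, ← div_div, mul_div_assoc,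
        div_self hk, mul_one]
    nlinarith

variable {E : Type*} [NormedAddCommGroup E] [InnerProductSpace ℝ E] [FiniteDimensional ℝ E]

lemma convexOn_continuous {f : E → ℝ} (hf : ConvexOn ℝ Set.univ f) : Continuous f := by
  rw [← continuousOn_univ]
  exact hf.continuousOn isOpen_univ

lemma epi_open {f : E → ℝ} (hf : ConvexOn ℝ Set.univ f) (x : E) :
    IsOpen {P : E × ℝ | f (x + P.1) - f x < P.2} := by
  have : Continuous fun P : E × ℝ => f (x + P.1) - f x :=
    ((convexOn_continuous hf).comp (continuous_const.add continuous_fst)).sub continuous_const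
  exact isOpen_lt this continuous_snd

lemma convex_combo_smul (x d1 d2 : E) {θ σ : ℝ} (hs : θ + σ = 1) :
    x + (θ • d1 + σ • d2) = θ • (x + d1) + σ • (x + d2) := by
  calc x + (θ • d1 + σ • d2) = (θ+σ) • x + (θ • d1 + σ • d2) := by rw [hs, one_smul]
    _ = θ • (x + d1) + σ • (x + d2) := by rw [add_smul, smul_add, smul_add]; abel

lemma epi_convex {f : E → ℝ} (hf : ConvexOn ℝ Set.univ f) (x : E) :
    Convex ℝ {P : E × ℝ | f (x + P.1) - f x < P.2} := by
  rintro ⟨d1, t1⟩ h1 ⟨d2, t2⟩ h2 θ σ hθ hσ hs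
  simp only [Set.mem_setOf_eq] at h1 h2 ⊢
  have hx : x + (θ • d1 + σ • d2) = θ • (x + d1) + σ • (x + d2) := convex_combo_smul x d1 d2 hs
  have hc := hf.2 (Set.mem_univ (x + d1)) (Set.mem_univ (x + d2)) hθ hσ hs
  simp only [smul_eq_mul] at hc
  simp only [Prod.smul_mk, Prod.mk_add_mk, smul_eq_mul]
  have he : θ * f (x+d1) + σ * f (x+d2) - f x
      = θ * (f (x + d1) - f x) + σ * (f (x + d2) - f x) := by
    have : θ * f x + σ * f x = f x := by rw [← add_mul, hs, one_mul]
    linarith [this]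
  calc f (x + (θ • d1 + σ • d2)) - f x = f (θ • (x + d1) + σ • (x + d2)) - f x := by rw [hx]
    _ ≤ θ * f (x + d1) + σ * f (x + d2) - f x := by linarith
    _ = θ * (f (x + d1) - f x) + σ * (f (x + d2) - f x) := he
    _ < θ * t1 + σ * t2 := combo_lt hθ hσ hs h1 h2

lemma exists_subgradient {f : E → ℝ} (hf : ConvexOn ℝ Set.univ f) (x : E) :
    ∃ s, IsSubgradientAt f s x := by
  have h0 : ((0 : E), (0 : ℝ)) ∉ {P : E × ℝ | f (x + P.1) - f x < P.2} := by
    simp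
  obtain ⟨φ, hφ⟩ := geometric_hahn_banach_open_point (epi_convex hf x) (epi_open hf x) h0
  have hz : φ ((0:E), (0:ℝ)) = 0 := by
    rw [show ((0:E),(0:ℝ)) = (0 : E × ℝ) from rfl, map_zero]
  rw [hz] at hφ
  set β := φ (0, 1) with hβ
  have hdec : ∀ d : E, ∀ t : ℝ, φ (d, t) = φ (d, 0) + t * β := by
    intro d t
    have h1 : (d, t) = (d, (0:ℝ)) + t • ((0:E), (1:ℝ)) := by
      simp [Prod.ext_iff]
    rw [h1, map_add, map_smul]
    simp [hβ]
  have hkey : ∀ d : E, ∀ t : ℝ, f (x + d) - f x < t → φ (d, 0) + t * β < 0 := by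
    intro d t ht
    have := hφ (d, t) ht
    rwa [hdec] at this
  have hβ0 : β < 0 := by
    rcases lt_trichotomy β 0 with h | h | h
    · exact h
    · exfalso
      have h2 := hkey 0 1 (by simp)
      rw [h, hz] at h2
      norm_num at h2
    · exfalso
      have h2 := hkey 0 (1/β) (by simp; positivity)
      rw [hz, one_div, inv_mul_cancel₀ (ne_of_gt h)] at h2
      norm_num at h2
  set L : E →L[ℝ] ℝ := φ.comp (ContinuousLinearMap.inl ℝ E ℝ) with hL
  have hLd : ∀ d : E, L d = φ (d, 0) := by intro d; simp [hL]
  set s : E := (-β)⁻¹ • ((InnerProductSpace.toDual ℝ E).symm L) with hs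
  refine ⟨s, fun yy => ?_⟩
  have hld : ∀ d : E, φ (d, 0) ≤ (-β) * (f (x + d) - f x) := by
    intro d
    have h1 : ∀ ε : ℝ, 0 < ε → 0 < (-(φ (d,0)) + (-β) * (f (x+d) - f x)) + ε * (-β) := by
      intro ε hε
      have := hkey d (f (x + d) - f x + ε) (by linarith)
      nlinarith
    have := nonneg_of_forall_pos_eps h1
    linarith
  have hinner : ⟪s, yy - x⟫ = (-β)⁻¹ * φ (yy - x, 0) := by
    rw [hs, real_inner_smul_left]
    congr 1
    rw [← hLd]
    exact InnerProductSpace.toDual_symm_apply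
  rw [ge_iff_le, hinner]
  have h4 := hld (yy - x)
  have hb : (0:ℝ) < -β := by linarith
  have h5 : x + (yy - x) = yy := by abel
  rw [h5] at h4
  have h6 := mul_le_mul_of_nonneg_left h4 (inv_nonneg.mpr hb.le)
  have h7 : (-β)⁻¹ * ((-β) * (f yy - f x)) = f yy - f x := by
    rw [← mul_assoc, inv_mul_cancel₀ (ne_of_gt hb), one_mul]
  linarith

/-- Moreau–Rockafellar style decomposition at a point. -/
lemma subgradient_add_decomp {f g : E → ℝ} (hf : ConvexOn ℝ Set.univ f)
    (hg : ConvexOn ℝ Set.univ g) (x s : E)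
    (hs : ∀ y, f y + g y ≥ f x + g x + ⟪s, y - x⟫) :
    ∃ s1 s2 : E, IsSubgradientAt f s1 x ∧ IsSubgradientAt g s2 x ∧ s1 + s2 = s := by
  set Aset := {P : E × ℝ | f (x + P.1) - f x < P.2} with hAset
  set Bset := {P : E × ℝ | P.2 ≤ ⟪s, P.1⟫ - (g (x + P.1) - g x)} with hBset
  have hBconv : Convex ℝ Bset := by
    rintro ⟨d1, t1⟩ h1 ⟨d2, t2⟩ h2 θ σ hθ hσ hsum
    simp only [hBset, Set.mem_setOf_eq] at h1 h2 ⊢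
    simp only [Prod.smul_mk, Prod.mk_add_mk, smul_eq_mul]
    have hc := hg.2 (Set.mem_univ (x + d1)) (Set.mem_univ (x + d2)) hθ hσ hsum
    simp only [smul_eq_mul] at hc
    rw [convex_combo_smul x d1 d2 hsum] at *
    have hi : ⟪s, θ • d1 + σ • d2⟫ = θ * ⟪s, d1⟫ + σ * ⟪s, d2⟫ := by
      rw [inner_add_right, real_inner_smul_right, real_inner_smul_right]
    have hgx : θ * g x + σ * g x = g x := by rw [← add_mul, hsum, one_mul]
    have e1 := mul_le_mul_of_nonneg_left h1 hθ
    have e2 := mul_le_mul_of_nonneg_left h2 hσ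
    rw [hi]
    nlinarith [hc, hgx, e1, e2]
  have hdisj : Disjoint Aset Bset := by
    rw [Set.disjoint_left]
    rintro ⟨dd, t⟩ hA hB
    simp only [hAset, hBset, Set.mem_setOf_eq] at hA hB
    have := hs (x + dd)
    have hxd : x + dd - x = dd := by abel
    rw [hxd] at this
    linarith
  obtain ⟨φ, c, hφA, hφB⟩ := geometric_hahn_banach_open (epi_convex hf x) (epi_open hf x)
    hBconv hdisj
  have hz : φ ((0:E), (0:ℝ)) = 0 := by
    rw [show ((0:E),(0:ℝ)) = (0 : E × ℝ) from rfl, map_zero]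
  set β := φ (0, 1) with hβ
  have hdec : ∀ d : E, ∀ t : ℝ, φ (d, t) = φ (d, 0) + t * β := by
    intro d t
    have h1 : (d, t) = (d, (0:ℝ)) + t • ((0:E), (1:ℝ)) := by simp [Prod.ext_iff]
    rw [h1, map_add, map_smul]; simp [hβ]
  have hc0 : c ≤ 0 := by
    have : ((0:E), (0:ℝ)) ∈ Bset := by simp [hBset]
    have := hφB _ this
    rwa [hz] at this
  have hkeyA : ∀ d : E, ∀ t : ℝ, f (x + d) - f x < t → φ (d, 0) + t * β < c := by
    intro d t ht
    have := hφA (d, t) ht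
    rwa [hdec] at this
  have hβ0 : β < 0 := by
    by_contra h
    push_neg at h
    have h2 := hkeyA 0 1 (by simp)
    rw [hz] at h2
    norm_num at h2
    linarith
  have hceq : c = 0 := by
    refine le_antisymm hc0 ?_
    refine nonneg_of_forall_pos_eps (k := -β) fun ε hε => ?_
    have h2 := hkeyA 0 ε (by simpa using hε)
    rw [hz] at h2
    nlinarith
  set L : E →L[ℝ] ℝ := φ.comp (ContinuousLinearMap.inl ℝ E ℝ) with hL
  have hLd : ∀ d : E, L d = φ (d, 0) := by intro d; simp [hL]
  set w : E := (-β)⁻¹ • ((InnerProductSpace.toDual ℝ E).symm L) with hw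
  have hb : (0:ℝ) < -β := by linarith
  have hinner : ∀ d : E, ⟪w, d⟫ = (-β)⁻¹ * φ (d, 0) := by
    intro d
    rw [hw, real_inner_smul_left]
    congr 1
    rw [← hLd]
    exact InnerProductSpace.toDual_symm_apply
  have hfside : IsSubgradientAt f w x := by
    intro yy
    have hld : φ (yy - x, 0) ≤ (-β) * (f yy - f x) := by
      have h1 : ∀ ε : ℝ, 0 < ε →
          0 < (-(φ (yy - x,0)) + (-β) * (f (x + (yy - x)) - f x)) + ε * (-β) := by
        intro ε hε
        have := hkeyA (yy - x) (f (x + (yy - x)) - f x + ε) (by linarith)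
        rw [hceq] at this
        nlinarith
      have h2 := nonneg_of_forall_pos_eps h1
      have h5 : x + (yy - x) = yy := by abel
      rw [h5] at h2
      linarith
    rw [ge_iff_le, hinner]
    have h6 := mul_le_mul_of_nonneg_left hld (inv_nonneg.mpr hb.le)
    have h7 : (-β)⁻¹ * ((-β) * (f yy - f x)) = f yy - f x := by
      rw [← mul_assoc, inv_mul_cancel₀ (ne_of_gt hb), one_mul]
    linarith
  have hgside : IsSubgradientAt g (s - w) x := by
    intro yy
    have hmem : ((yy - x), ⟪s, yy - x⟫ - (g (x + (yy - x)) - g x)) ∈ Bset := by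
      simp only [hBset, Set.mem_setOf_eq]
      exact le_rfl
    have h2 := hφB _ hmem
    rw [hdec, hceq] at h2
    set t := ⟪s, yy - x⟫ - (g (x + (yy - x)) - g x) with hteq
    have h3 : φ (yy - x, 0) ≥ t * (-β) := by nlinarith
    have h4 : ⟪w, yy - x⟫ ≥ t := by
      rw [hinner]
      have := mul_le_mul_of_nonneg_left h3 (inv_nonneg.mpr hb.le)
      have h7 : (-β)⁻¹ * (t * (-β)) = t := by
        rw [mul_comm t, ← mul_assoc, inv_mul_cancel₀ (ne_of_gt hb), one_mul]
      linarith
    have h5 : x + (yy - x) = yy := by abel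
    rw [hteq, h5] at h4
    have h8 : ⟪s - w, yy - x⟫ = ⟪s, yy - x⟫ - ⟪w, yy - x⟫ := by
      rw [inner_sub_left]
    rw [ge_iff_le, h8]
    linarith
  exact ⟨w, s - w, hfside, hgside, by abel⟩

lemma convexOn_finsum {ι : Type*} (t : Finset ι) (h : ι → E → ℝ)
    (hh : ∀ j ∈ t, ConvexOn ℝ Set.univ (h j)) :
    ConvexOn ℝ Set.univ (fun y => ∑ j ∈ t, h j y) := by
  classical
  induction t using Finset.induction with
  | empty => simpa using convexOn_const 0 convex_univ
  | insert a tt hnotmem ih =>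
    simp only [Finset.sum_insert hnotmem]
    exact (hh a (Finset.mem_insert_self a tt)).add
      (ih fun j hj => hh j (Finset.mem_insert_of_mem hj))

lemma subgradient_finsum_decomp {k : ℕ} (h : Fin k → E → ℝ)
    (hh : ∀ j, ConvexOn ℝ Set.univ (h j)) (x s : E)
    (hs : ∀ y, (∑ j, h j y) ≥ (∑ j, h j x) + ⟪s, y - x⟫) :
    ∃ w : Fin k → E, (∀ j, IsSubgradientAt (h j) (w j) x) ∧ ∑ j, w j = s := by
  induction k generalizing s with
  | zero =>
    refine ⟨fun j => 0, fun j => j.elim0, ?_⟩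
    have := hs (x + s)
    simp only [Finset.univ_eq_empty, Finset.sum_empty] at this
    have h5 : x + s - x = s := by abel
    rw [h5] at this
    have : s = 0 := real_inner_self_nonpos.mp (by linarith)
    simp [this]
  | succ k ih =>
    have hrest : ConvexOn ℝ Set.univ (fun y => ∑ j : Fin k, h j.succ y) :=
      convexOn_finsum _ _ (fun j _ => hh j.succ)
    have hsum : ∀ y, h 0 y + (∑ j : Fin k, h j.succ y)
        ≥ h 0 x + (∑ j : Fin k, h j.succ x) + ⟪s, y - x⟫ := by
      intro y
      have := hs y
      rw [Fin.sum_univ_succ (f := fun j => h j y),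
        Fin.sum_univ_succ (f := fun j => h j x)] at this
      linarith
    obtain ⟨s1, s2, hs1, hs2, hadd⟩ := subgradient_add_decomp (hh 0) hrest x s
      (fun y => by have := hsum y; linarith [hsum y])
    obtain ⟨w', hw', hw'sum⟩ := ih (fun j => h j.succ) (fun j => hh j.succ) s2 (fun y => hs2 y)
    refine ⟨Fin.cons s1 w', ?_, ?_⟩
    · intro j
      refine Fin.cases ?_ ?_ j
      · simpa using hs1
      · intro jj; simpa using hw' jj
    · rw [Fin.sum_univ_succ]
      simp only [Fin.cons_zero, Fin.cons_succ]
      rw [hw'sum, hadd]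

lemma stationarity_decomp {k : ℕ} {f : E → ℝ} (hf : ConvexOn ℝ Set.univ f)
    {g : Fin k → E → ℝ} (hg : ∀ l, ConvexOn ℝ Set.univ (g l))
    {Y : Fin k → ℝ} (hY : ∀ l, 0 ≤ Y l) (c x₀ : E)
    (hmin : ∀ t, f t + (∑ l, Y l * g l t) + ⟪c, t⟫
      ≥ f x₀ + (∑ l, Y l * g l x₀) + ⟪c, x₀⟫) :
    ∃ (sf : E) (sg : Fin k → E), IsSubgradientAt f sf x₀ ∧
      (∀ l, IsSubgradientAt (g l) (sg l) x₀) ∧ sf + c + ∑ l, Y l • sg l = 0 := by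
  set h : Fin (k+1) → E → ℝ := Fin.cons f (fun l t => Y l * g l t) with hh_def
  have hsum_eq : ∀ t, (∑ j, h j t) = f t + ∑ l, Y l * g l t := by
    intro t
    rw [Fin.sum_univ_succ]
    simp [hh_def]
  have hconv : ∀ j, ConvexOn ℝ Set.univ (h j) := by
    refine Fin.cases ?_ ?_
    · simpa [hh_def] using hf
    · intro l
      have := (hg l).smul (hY l)
      simp only [hh_def, Fin.cons_succ]
      exact this
  have hsub : ∀ y, (∑ j, h j y) ≥ (∑ j, h j x₀) + ⟪-c, y - x₀⟫ := by
    intro y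
    rw [hsum_eq, hsum_eq]
    have hi : ⟪-c, y - x₀⟫ = ⟪c, x₀⟫ - ⟪c, y⟫ := by
      rw [inner_neg_left, inner_sub_right]; ring
    rw [hi]
    linarith [hmin y]
  obtain ⟨w, hw, hwsum⟩ := subgradient_finsum_decomp h hconv x₀ (-c) hsub
  have hw0 : IsSubgradientAt f (w 0) x₀ := by
    have := hw 0
    simpa [hh_def] using this
  have hsg : ∀ l : Fin k, ∃ sgl : E,
      IsSubgradientAt (g l) sgl x₀ ∧ Y l • sgl = w l.succ := by
    intro l
    have hwl : IsSubgradientAt (fun t => Y l * g l t) (w l.succ) x₀ := by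
      have := hw l.succ
      simpa [hh_def] using this
    rcases eq_or_lt_of_le (hY l) with h0 | h0
    · have hwzero : w l.succ = 0 := by
        have h1 := hwl (x₀ + w l.succ)
        rw [← h0] at h1
        simp only [zero_mul, ge_iff_le] at h1
        have h2 : x₀ + w l.succ - x₀ = w l.succ := by abel
        rw [h2] at h1
        exact real_inner_self_nonpos.mp (by linarith)
      obtain ⟨sgl, hsgl⟩ := exists_subgradient (hg l) x₀
      exact ⟨sgl, hsgl, by rw [← h0, zero_smul, hwzero]⟩
    · refine ⟨(Y l)⁻¹ • w l.succ, fun t => ?_, ?_⟩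
      · have h1 := hwl t
        simp only [ge_iff_le] at h1 ⊢
        rw [real_inner_smul_left]
        have h2 := mul_le_mul_of_nonneg_left (by linarith [h1] :
          ⟪w l.succ, t - x₀⟫ ≤ Y l * g l t - Y l * g l x₀) (inv_nonneg.mpr (le_of_lt h0))
        have h3 : (Y l)⁻¹ * (Y l * g l t - Y l * g l x₀) = g l t - g l x₀ := by
          field_simp
        rw [h3] at h2
        linarith
      · rw [smul_smul, mul_inv_cancel₀ (ne_of_gt h0), one_smul]
  choose sg hsg1 hsg2 using hsg
  refine ⟨w 0, sg, hw0, hsg1, ?_⟩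
  have : (∑ l, Y l • sg l) = ∑ l : Fin k, w l.succ := by
    exact Finset.sum_congr rfl fun l _ => hsg2 l
  rw [this]
  have h4 : w 0 + ∑ l : Fin k, w l.succ = -c := by
    rw [← Fin.sum_univ_succ]; exact hwsum
  rw [add_comm (w 0) c, add_assoc, h4]
  abel

lemma sum_update_univ {n : ℕ} {γ : Fin n → Type*} {M : Type*} [AddCommMonoid M]
    (Ffun : ∀ j, γ j → M) (x : ∀ j, γ j) (i : Fin n) (t : γ i) :
    (∑ j, Ffun j (Function.update x i t j))
      = Ffun i t + ∑ j ∈ Finset.univ.erase i, Ffun j (x j) := by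
  rw [← Finset.add_sum_erase _ (fun j => Ffun j (Function.update x i t j)) (mem_univ i)]
  congr 1
  · rw [Function.update_self]
  · exact Finset.sum_congr rfl fun j hj => by
      rw [Function.update_of_ne (Finset.mem_erase.mp hj).1]

/-- The coupling linear map `x ↦ ∑ i, A i (x i)`. -/
noncomputable def sumMap {N p : ℕ} {d : Fin N → ℕ}
    (A : ∀ i, EuclideanSpace ℝ (Fin (d i)) →L[ℝ] EuclideanSpace ℝ (Fin p)) :
    (∀ i, EuclideanSpace ℝ (Fin (d i))) →ₗ[ℝ] EuclideanSpace ℝ (Fin p) where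
  toFun x := ∑ i, A i (x i)
  map_add' a b := by
    simp only [Pi.add_apply, map_add]
    rw [Finset.sum_add_distrib]
  map_smul' c a := by
    simp only [Pi.smul_apply, map_smul, RingHom.id_apply]
    rw [Finset.smul_sum]

end KKTHelpers

set_option maxHeartbeats 8000000 in
/-- KKT characterization of optimality for the reformulated problem:
under Slater's condition, a feasible point `(x*, v*, z*)` is optimal iff there exist
multipliers `u_i*, y_i*` satisfying the local stationarity/complementarity conditions and the
global consensus and zero-sum conditions. -/
theorem kkt_characterization
    (N p q : ℕ) (d : Fin N → ℕ)
    (f : ∀ i, EuclideanSpace ℝ (Fin (d i)) → ℝ)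
    (hf : ∀ i, ConvexOn ℝ Set.univ (f i))
    (g : ∀ i, EuclideanSpace ℝ (Fin (d i)) → EuclideanSpace ℝ (Fin q))
    (hg : ∀ i l, ConvexOn ℝ Set.univ (fun x => g i x l))
    (A : ∀ i, EuclideanSpace ℝ (Fin (d i)) →L[ℝ] EuclideanSpace ℝ (Fin p))
    (b : Fin N → EuclideanSpace ℝ (Fin p))
    -- Slater's condition for the underlying coupled problem
    (hslater : ∃ xt : ∀ i, EuclideanSpace ℝ (Fin (d i)),
      (∑ i, (A i (xt i) - b i)) = 0 ∧ ∀ l, (∑ i, g i (xt i)) l < 0)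
    -- a feasible point of the reformulated problem
    (xstar : ∀ i, EuclideanSpace ℝ (Fin (d i)))
    (vstar : Fin N → EuclideanSpace ℝ (Fin p))
    (zstar : Fin N → EuclideanSpace ℝ (Fin q))
    (hfeq : ∀ i, A i (xstar i) - b i = vstar i)
    (hfineq : ∀ i l, g i (xstar i) l ≤ zstar i l)
    (hvsum : (∑ i, vstar i) = 0) (hzsum : (∑ i, zstar i) = 0) :
    -- optimality for the reformulated problem
    (∀ (x : ∀ i, EuclideanSpace ℝ (Fin (d i)))
        (v : Fin N → EuclideanSpace ℝ (Fin p))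
        (z : Fin N → EuclideanSpace ℝ (Fin q)),
      ((∀ i, A i (x i) - b i = v i) ∧ (∀ i l, g i (x i) l ≤ z i l) ∧
        (∑ i, v i) = 0 ∧ (∑ i, z i) = 0) →
      ∑ i, f i (xstar i) ≤ ∑ i, f i (x i))
    ↔
    (∃ (u : Fin N → EuclideanSpace ℝ (Fin p)) (y : Fin N → EuclideanSpace ℝ (Fin q)),
      -- local conditions
      (∀ i, ∃ (sf : EuclideanSpace ℝ (Fin (d i)))
          (sg : Fin q → EuclideanSpace ℝ (Fin (d i))),
        IsSubgradientAt (f i) sf (xstar i) ∧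
        (∀ l, IsSubgradientAt (fun x => g i x l) (sg l) (xstar i)) ∧
        sf + ContinuousLinearMap.adjoint (A i) (u i) + ∑ l, y i l • sg l = 0) ∧
      (∀ i, A i (xstar i) - b i - vstar i = 0) ∧
      (∀ i, ⟪y i, g i (xstar i) - zstar i⟫ = 0) ∧
      (∀ i l, 0 ≤ y i l) ∧
      -- global conditions
      (∀ i j, u i = u j) ∧ (∀ i j, y i = y j) ∧
      (∑ i, vstar i) = 0 ∧ (∑ i, zstar i) = 0) := by
  classical
  constructor
  · -- forward direction: optimality implies KKT
    intro hopt
    rcases Nat.eq_zero_or_pos N with hN0 | hN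
    · subst hN0
      exact ⟨fun i => i.elim0, fun i => i.elim0, fun i => i.elim0, fun i => i.elim0,
        fun i => i.elim0, fun i => i.elim0, fun i => i.elim0, fun i => i.elim0,
        hvsum, hzsum⟩
    -- notation
    set Fstar := ∑ i, f i (xstar i) with hFstar
    set Gfun : (∀ i, EuclideanSpace ℝ (Fin (d i))) → EuclideanSpace ℝ (Fin q) :=
      fun x => ∑ i, g i (x i) with hGdef
    set L := sumMap A with hLdef
    set βv := ∑ i, b i with hβdef
    have hLapp : ∀ x, L x = ∑ i, A i (x i) := fun x => rfl
    have hGapp : ∀ x l, Gfun x l = ∑ i, g i (x i) l := by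
      intro x l
      rw [hGdef]
      rw [WithLp.ofLp_sum, Finset.sum_apply]
    have hLxstar : L xstar = βv := by
      have h1 : ∑ i, (A i (xstar i) - b i) = 0 := by
        rw [Finset.sum_congr rfl fun i _ => hfeq i]; exact hvsum
      rw [Finset.sum_sub_distrib] at h1
      rw [hLapp, hβdef]
      exact sub_eq_zero.mp h1
    have hGxstar_le : ∀ l, Gfun xstar l ≤ 0 := by
      intro l
      rw [hGapp]
      calc (∑ i, g i (xstar i) l) ≤ ∑ i, zstar i l :=
            Finset.sum_le_sum fun i _ => hfineq i l
        _ = (∑ i, zstar i) l := by rw [WithLp.ofLp_sum, Finset.sum_apply]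
        _ = 0 := by rw [hzsum]; rfl
    obtain ⟨xt, hxt1, hxt2⟩ := hslater
    have hLxt : L xt = βv := by
      rw [Finset.sum_sub_distrib] at hxt1
      rw [hLapp, hβdef]
      exact sub_eq_zero.mp hxt1
    have hGxt : ∀ l, Gfun xt l < 0 := fun l => hxt2 l
    set V := LinearMap.range L with hVdef
    have hmemV : ∀ x, L x - βv ∈ V := by
      intro x
      rw [← hLxstar]
      exact ⟨x - xstar, by rw [map_sub]⟩
    -- the open convex set to be separated from 0
    set C : Set (ℝ × EuclideanSpace ℝ (Fin q) × ↥V) :=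
      {P | ∃ x, (∑ i, f i (x i)) - Fstar < P.1 ∧ (∀ l, Gfun x l < P.2.1 l) ∧
        L x - βv = (P.2.2 : EuclideanSpace ℝ (Fin p))} with hCdef
    have hNne : ((N:ℝ)) ≠ 0 := (Nat.cast_pos.mpr hN).ne'
    have hC0 : (0 : ℝ × EuclideanSpace ℝ (Fin q) × ↥V) ∉ C := by
      rintro ⟨x, h1, h2, h3⟩
      have h1' : (∑ i, f i (x i)) - Fstar < 0 := h1
      have h2' : ∀ l, Gfun x l < 0 := fun l => h2 l
      have h3' : L x = βv := by
        have h4 : L x - βv = ((0 : ↥V) : EuclideanSpace ℝ (Fin p)) := h3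
        rw [ZeroMemClass.coe_zero] at h4
        exact sub_eq_zero.mp h4
      set vfun := fun i => A i (x i) - b i with hvfun
      set zfun := fun i => g i (x i) - (N:ℝ)⁻¹ • (Gfun x) with hzfun
      have hzineq : ∀ i l, g i (x i) l ≤ zfun i l := by
        intro i l
        have he : zfun i l = g i (x i) l - (N:ℝ)⁻¹ * Gfun x l := by
          simp [hzfun, PiLp.sub_apply, PiLp.smul_apply, smul_eq_mul]
        rw [he]
        have h5 := h2' l
        have h6 : 0 ≤ (N:ℝ)⁻¹ * (-(Gfun x l)) :=
          mul_nonneg (inv_nonneg.mpr (Nat.cast_nonneg N)) (by linarith)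
        nlinarith
      have hvsum0 : ∑ i, vfun i = 0 := by
        rw [hvfun, Finset.sum_sub_distrib, ← hLapp, ← hβdef, h3', sub_self]
      have hzsum0 : ∑ i, zfun i = 0 := by
        rw [hzfun, Finset.sum_sub_distrib, Finset.sum_const, card_univ, Fintype.card_fin]
        rw [← Nat.cast_smul_eq_nsmul ℝ, smul_smul, mul_inv_cancel₀ hNne, one_smul]
        rw [hGdef, sub_self]
      have := hopt x vfun zfun ⟨fun i => rfl, hzineq, hvsum0, hzsum0⟩
      linarith
    -- continuity facts
    have hFcont : Continuous (fun xx : ∀ i, EuclideanSpace ℝ (Fin (d i)) =>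
        ∑ i, f i (xx i)) :=
      continuous_finset_sum _ fun i _ =>
        (convexOn_continuous (hf i)).comp (continuous_apply i)
    have hGcont : ∀ l, Continuous (fun xx : ∀ i, EuclideanSpace ℝ (Fin (d i)) =>
        Gfun xx l) := by
      intro l
      have he : (fun xx : ∀ i, EuclideanSpace ℝ (Fin (d i)) => Gfun xx l)
          = fun xx => ∑ i, g i (xx i) l := funext fun xx => hGapp xx l
      rw [he]
      exact continuous_finset_sum _ fun i _ =>
        (convexOn_continuous (hg i l)).comp (continuous_apply i)
    -- a continuous linear right inverse of L onto its range
    obtain ⟨σV, hσcomp⟩ := L.rangeRestrict.exists_rightInverse_of_surjective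
      (LinearMap.range_eq_top.2 L.surjective_rangeRestrict)
    have hσ : ∀ vv : ↥V, L (σV vv) = (vv : EuclideanSpace ℝ (Fin p)) := by
      intro vv
      have h4 : L.rangeRestrict (σV vv) = vv := by
        rw [← LinearMap.comp_apply, hσcomp]; rfl
      have h5 := congrArg (Subtype.val) h4
      simpa using h5
    have hCopen : IsOpen C := by
      rw [isOpen_iff_mem_nhds]
      rintro ⟨r, w, s⟩ ⟨x, h1, h2, h3⟩
      set m : (ℝ × EuclideanSpace ℝ (Fin q) × ↥V) → (∀ i, EuclideanSpace ℝ (Fin (d i))) :=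
        fun Q => x + σV (Q.2.2 - s) with hm
      have hmcont : Continuous m :=
        continuous_const.add ((σV.continuous_of_finiteDimensional).comp
          (((continuous_snd.comp continuous_snd)).sub continuous_const))
      set Uset := {Q : ℝ × EuclideanSpace ℝ (Fin q) × ↥V |
          (∑ i, f i (m Q i)) - Fstar < Q.1} ∩
        ⋂ l, {Q : ℝ × EuclideanSpace ℝ (Fin q) × ↥V | Gfun (m Q) l < Q.2.1 l} with hUset
      have hUopen : IsOpen Uset := by
        refine IsOpen.inter ?_ ?_
        · exact isOpen_lt ((hFcont.comp hmcont).sub continuous_const) continuous_fst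
        · exact isOpen_iInter_of_finite fun l => isOpen_lt ((hGcont l).comp hmcont)
            (((EuclideanSpace.proj l).continuous).comp (continuous_fst.comp continuous_snd))
      have hmP : m (r, w, s) = x := by
        rw [hm]; simp
      have hPU : (r, w, s) ∈ Uset := by
        refine ⟨?_, ?_⟩
        · show (∑ i, f i (m (r,w,s) i)) - Fstar < r
          rw [hmP]; exact h1
        · refine Set.mem_iInter.mpr fun l => ?_
          show Gfun (m (r,w,s)) l < w l
          rw [hmP]; exact h2 l
      have hUC : Uset ⊆ C := by
        rintro ⟨r', w', s'⟩ ⟨ha, hb⟩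
        refine ⟨m (r', w', s'), ha, ?_, ?_⟩
        · intro l
          exact Set.mem_iInter.mp hb l
        · show L (x + σV (s' - s)) - βv = (s' : EuclideanSpace ℝ (Fin p))
          rw [map_add, hσ]
          have hcoe : ((s' - s : ↥V) : EuclideanSpace ℝ (Fin p))
              = (s' : EuclideanSpace ℝ (Fin p)) - (s : EuclideanSpace ℝ (Fin p)) := rfl
          rw [hcoe]
          have h6 : L x + ((s' : EuclideanSpace ℝ (Fin p)) - s) - βv
              = (L x - βv) + ((s' : EuclideanSpace ℝ (Fin p)) - s) := by abel
          rw [h6, h3]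
          abel
      exact Filter.mem_of_superset (hUopen.mem_nhds hPU) hUC
    have hCconv : Convex ℝ C := by
      rintro ⟨r1, w1, s1⟩ ⟨x1, ha1, hb1, hc1⟩ ⟨r2, w2, s2⟩ ⟨x2, ha2, hb2, hc2⟩ θ σc hθ hσc hsum
      refine ⟨θ • x1 + σc • x2, ?_, ?_, ?_⟩
      · show (∑ i, f i ((θ • x1 + σc • x2) i)) - Fstar < (θ • (r1,w1,s1) + σc • (r2,w2,s2)).1
        have hP1 : (θ • ((r1,w1,s1) : ℝ × EuclideanSpace ℝ (Fin q) × ↥V)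
            + σc • ((r2,w2,s2) : ℝ × EuclideanSpace ℝ (Fin q) × ↥V)).1 = θ * r1 + σc * r2 := rfl
        rw [hP1]
        have hFcomb : (∑ i, f i ((θ • x1 + σc • x2) i))
            ≤ θ * (∑ i, f i (x1 i)) + σc * (∑ i, f i (x2 i)) := by
          rw [Finset.mul_sum, Finset.mul_sum, ← Finset.sum_add_distrib]
          refine Finset.sum_le_sum fun i _ => ?_
          have hcv := (hf i).2 (Set.mem_univ (x1 i)) (Set.mem_univ (x2 i)) hθ hσc hsum
          simpa [smul_eq_mul] using hcv
        have hcl := combo_lt hθ hσc hsum ha1 ha2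
        have hfs : θ * Fstar + σc * Fstar = Fstar := by rw [← add_mul, hsum, one_mul]
        nlinarith [hFcomb, hcl, hfs]
      · intro l
        show Gfun (θ • x1 + σc • x2) l < (θ • (r1,w1,s1) + σc • (r2,w2,s2)).2.1 l
        have hP2 : (θ • ((r1,w1,s1) : ℝ × EuclideanSpace ℝ (Fin q) × ↥V)
            + σc • ((r2,w2,s2) : ℝ × EuclideanSpace ℝ (Fin q) × ↥V)).2.1 l
            = θ * w1 l + σc * w2 l := rfl
        rw [hP2, hGapp]
        have hGcomb : (∑ i, g i ((θ • x1 + σc • x2) i) l)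
            ≤ θ * Gfun x1 l + σc * Gfun x2 l := by
          rw [hGapp, hGapp, Finset.mul_sum, Finset.mul_sum, ← Finset.sum_add_distrib]
          refine Finset.sum_le_sum fun i _ => ?_
          have hcv := (hg i l).2 (Set.mem_univ (x1 i)) (Set.mem_univ (x2 i)) hθ hσc hsum
          simpa [smul_eq_mul] using hcv
        have hcl := combo_lt hθ hσc hsum (hb1 l) (hb2 l)
        linarith
      · show L (θ • x1 + σc • x2) - βv
            = ((θ • (r1,w1,s1) + σc • (r2,w2,s2)).2.2 : EuclideanSpace ℝ (Fin p))
        have hP3 : ((θ • ((r1,w1,s1) : ℝ × EuclideanSpace ℝ (Fin q) × ↥V)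
            + σc • ((r2,w2,s2) : ℝ × EuclideanSpace ℝ (Fin q) × ↥V)).2.2
              : EuclideanSpace ℝ (Fin p))
            = θ • (s1 : EuclideanSpace ℝ (Fin p)) + σc • (s2 : EuclideanSpace ℝ (Fin p)) := rfl
        rw [hP3]
        have hbb : θ • βv + σc • βv = βv := by rw [← add_smul, hsum, one_smul]
        have h6 : L (θ • x1 + σc • x2) - βv = θ • (L x1 - βv) + σc • (L x2 - βv) := by
          calc L (θ • x1 + σc • x2) - βv
              = (θ • L x1 + σc • L x2) - (θ • βv + σc • βv) := by
                rw [map_add, map_smul, map_smul, hbb]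
            _ = θ • (L x1 - βv) + σc • (L x2 - βv) := by
                rw [smul_sub, smul_sub]; abel
        rw [h6, hc1, hc2]
    -- separation
    obtain ⟨φ, hφ⟩ := geometric_hahn_banach_open_point hCconv hCopen hC0
    have hφ0 : φ (0 : ℝ × EuclideanSpace ℝ (Fin q) × ↥V) = 0 := map_zero φ
    rw [hφ0] at hφ
    set μ0 := φ (1, 0, 0) with hμ0
    set fy : EuclideanSpace ℝ (Fin q) →L[ℝ] ℝ :=
      φ.comp ((ContinuousLinearMap.inr ℝ ℝ (EuclideanSpace ℝ (Fin q) × ↥V)).comp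
        (ContinuousLinearMap.inl ℝ (EuclideanSpace ℝ (Fin q)) ↥V)) with hfy
    set fs : ↥V →L[ℝ] ℝ :=
      φ.comp ((ContinuousLinearMap.inr ℝ ℝ (EuclideanSpace ℝ (Fin q) × ↥V)).comp
        (ContinuousLinearMap.inr ℝ (EuclideanSpace ℝ (Fin q)) ↥V)) with hfs
    have hφdec : ∀ (r : ℝ) (w : EuclideanSpace ℝ (Fin q)) (s : ↥V),
        φ (r, w, s) = r * μ0 + fy w + fs s := by
      intro r w s
      have h1 : ((r, w, s) : ℝ × EuclideanSpace ℝ (Fin q) × ↥V)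
          = r • ((1:ℝ), (0 : EuclideanSpace ℝ (Fin q)), (0:↥V))
            + ((0:ℝ), w, (0:↥V)) + ((0:ℝ), (0 : EuclideanSpace ℝ (Fin q)), s) := by
        simp [Prod.ext_iff]
      rw [h1, map_add, map_add, map_smul]
      simp only [hfy, hfs, hμ0, ContinuousLinearMap.comp_apply,
        ContinuousLinearMap.inl_apply, ContinuousLinearMap.inr_apply, smul_eq_mul]
    set yv := -((InnerProductSpace.toDual ℝ (EuclideanSpace ℝ (Fin q))).symm fy) with hyv
    have hfyw : ∀ w, fy w = -⟪yv, w⟫ := by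
      intro w
      have h1 : ⟪(InnerProductSpace.toDual ℝ (EuclideanSpace ℝ (Fin q))).symm fy, w⟫
          = fy w := InnerProductSpace.toDual_symm_apply
      rw [hyv]
      rw [show (⟪-((InnerProductSpace.toDual ℝ (EuclideanSpace ℝ (Fin q))).symm fy), w⟫ : ℝ)
        = -⟪(InnerProductSpace.toDual ℝ (EuclideanSpace ℝ (Fin q))).symm fy, w⟫
        from inner_neg_left _ _, h1, neg_neg]
    set uW : ↥V := -((InnerProductSpace.toDual ℝ ↥V).symm fs) with huW
    set uv : EuclideanSpace ℝ (Fin p) := (uW : EuclideanSpace ℝ (Fin p)) with huv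
    have hfss : ∀ s : ↥V, fs s = -⟪uv, (s : EuclideanSpace ℝ (Fin p))⟫ := by
      intro s
      have h1 : fs s = ⟪(InnerProductSpace.toDual ℝ ↥V).symm fs, s⟫ :=
        (InnerProductSpace.toDual_symm_apply).symm
      rw [h1, Submodule.coe_inner]
      have h2 : ((((InnerProductSpace.toDual ℝ ↥V).symm fs) : ↥V) : EuclideanSpace ℝ (Fin p))
          = -uv := by
        rw [huv, huW]
        simp
      rw [h2, inner_neg_left]
    set μ := -μ0 with hμdef
    have hkey2 : ∀ x (r : ℝ) (w : EuclideanSpace ℝ (Fin q)),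
        (∑ i, f i (x i)) - Fstar < r → (∀ l, Gfun x l < w l) →
        0 < μ * r + ⟪yv, w⟫ + ⟪uv, L x - βv⟫ := by
      intro x r w h1 h2
      have h3 := hφ (r, w, ⟨L x - βv, hmemV x⟩) ⟨x, h1, h2, rfl⟩
      rw [hφdec, hfyw, hfss] at h3
      have h4 : ((⟨L x - βv, hmemV x⟩ : ↥V) : EuclideanSpace ℝ (Fin p)) = L x - βv := rfl
      rw [h4] at h3
      have h5 : μ * r = -(r * μ0) := by rw [hμdef]; ring
      rw [h5]
      linarith
    -- the feasibility slack vector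
    set w1 : EuclideanSpace ℝ (Fin q) := WithLp.toLp 2 (fun l => Gfun xstar l + 1) with hw1
    have hw1gt : ∀ l, Gfun xstar l < w1 l := fun l => by
      show Gfun xstar l < Gfun xstar l + 1; linarith
    have hLxsub : L xstar - βv = 0 := by rw [hLxstar, sub_self]
    have hμnn : 0 ≤ μ := by
      refine nonneg_of_forall_pos_smul (c := ⟪yv, w1⟫ + ⟪uv, L xstar - βv⟫) fun r hr => ?_
      have h2 := hkey2 xstar r w1 (by rw [← hFstar, sub_self]; exact hr) hw1gt
      linarith
    have hyvnn : ∀ l, 0 ≤ yv l := by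
      intro l
      refine nonneg_of_forall_pos_smul
        (c := μ * 1 + ⟪yv, w1⟫ + ⟪uv, L xstar - βv⟫) fun t ht => ?_
      set wloc : EuclideanSpace ℝ (Fin q) := w1 + t • EuclideanSpace.single l (1:ℝ) with hwloc
      have hwgt : ∀ l', Gfun xstar l' < wloc l' := by
        intro l'
        have he : wloc l' = Gfun xstar l' + 1 + t * (if l' = l then 1 else 0) := by
          rw [hwloc, PiLp.add_apply, PiLp.smul_apply, EuclideanSpace.single_apply]
          have hw1l : w1 l' = Gfun xstar l' + 1 := rfl
          rw [hw1l, smul_eq_mul]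
        rw [he]
        by_cases hll : l' = l
        · rw [if_pos hll, mul_one]; linarith
        · rw [if_neg hll, mul_zero]; linarith
      have h2 := hkey2 xstar 1 wloc (by rw [← hFstar, sub_self]; exact one_pos) hwgt
      have h3 : ⟪yv, wloc⟫ = ⟪yv, w1⟫ + t * yv l := by
        rw [hwloc, inner_add_right, real_inner_smul_right]
        congr 1
        rw [EuclideanSpace.inner_single_right]
        simp
      rw [h3] at h2
      have h4 : yv l * t = t * yv l := mul_comm _ _
      rw [h4]
      linarith
    have hμpos : 0 < μ := by
      rcases eq_or_lt_of_le hμnn with h | h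
      · exfalso
        set ws : EuclideanSpace ℝ (Fin q) := WithLp.toLp 2 (fun l => Gfun xt l / 2) with hws
        have hwgt : ∀ l, Gfun xt l < ws l := by
          intro l
          show Gfun xt l < Gfun xt l / 2
          have := hGxt l
          linarith
        have h2 := hkey2 xt ((∑ i, f i (xt i)) - Fstar + 1) ws (by linarith) hwgt
        rw [hLxt, sub_self, inner_zero_right] at h2
        have h3 : ⟪yv, ws⟫ ≤ 0 := by
          simp only [PiLp.inner_apply, RCLike.inner_apply', conj_trivial]
          refine Finset.sum_nonpos fun l _ => ?_
          have h4 := hGxt l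
          have h5 : ws l = Gfun xt l / 2 := rfl
          exact mul_nonpos_of_nonneg_of_nonpos (hyvnn l) (by rw [h5]; linarith)
        have h6 : μ * ((∑ i, f i (xt i)) - Fstar + 1) = 0 := by rw [← h, zero_mul]
        linarith
      · exact h
    set Y := μ⁻¹ • yv with hYdef
    set Uv := μ⁻¹ • uv with hUvdef
    have hYnn : ∀ l, 0 ≤ Y l := by
      intro l
      have he : Y l = μ⁻¹ * yv l := rfl
      rw [he]
      exact mul_nonneg (inv_nonneg.mpr hμpos.le) (hyvnn l)
    set onev : EuclideanSpace ℝ (Fin q) := WithLp.toLp 2 (fun _ => 1) with honev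
    have hLag : ∀ x, Fstar ≤ (∑ i, f i (x i)) + ⟪Y, Gfun x⟫ + ⟪Uv, L x - βv⟫ := by
      intro x
      have hstep : 0 ≤ μ * ((∑ i, f i (x i)) - Fstar) + ⟪yv, Gfun x⟫ + ⟪uv, L x - βv⟫ := by
        refine nonneg_of_forall_pos_eps (k := μ + ⟪yv, onev⟫) fun ε hε => ?_
        have hwgt : ∀ l, Gfun x l < (Gfun x + ε • onev) l := by
          intro l
          have he : (Gfun x + ε • onev) l = Gfun x l + ε * 1 := rfl
          rw [he]; linarith
        have h2 := hkey2 x ((∑ i, f i (x i)) - Fstar + ε) (Gfun x + ε • onev)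
          (by linarith) hwgt
        have h3 : ⟪yv, Gfun x + ε • onev⟫ = ⟪yv, Gfun x⟫ + ε * ⟪yv, onev⟫ := by
          rw [inner_add_right, real_inner_smul_right]
        have h4 : μ * ((∑ i, f i (x i)) - Fstar + ε)
            = μ * ((∑ i, f i (x i)) - Fstar) + ε * μ := by ring
        rw [h4, h3] at h2
        linarith
      have h6 := mul_le_mul_of_nonneg_left hstep (inv_nonneg.mpr hμpos.le)
      rw [mul_zero, mul_add, mul_add, ← mul_assoc,
        inv_mul_cancel₀ (ne_of_gt hμpos), one_mul] at h6
      have h7 : ⟪Y, Gfun x⟫ = μ⁻¹ * ⟪yv, Gfun x⟫ := real_inner_smul_left _ _ _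
      have h8 : ⟪Uv, L x - βv⟫ = μ⁻¹ * ⟪uv, L x - βv⟫ := real_inner_smul_left _ _ _
      rw [h7, h8]
      linarith
    have hYGxstar : ⟪Y, Gfun xstar⟫ = 0 := by
      have h1 := hLag xstar
      rw [hLxsub, inner_zero_right, ← hFstar] at h1
      have h2 : ⟪Y, Gfun xstar⟫ ≤ 0 := by
        simp only [PiLp.inner_apply, RCLike.inner_apply', conj_trivial]
        exact Finset.sum_nonpos fun l _ =>
          mul_nonpos_of_nonneg_of_nonpos (hYnn l) (hGxstar_le l)
      linarith
    -- per-i minimization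
    have hmin : ∀ i, ∀ t, f i t + (∑ l, Y l * g i t l)
          + ⟪ContinuousLinearMap.adjoint (A i) Uv, t⟫
        ≥ f i (xstar i) + (∑ l, Y l * g i (xstar i) l)
          + ⟪ContinuousLinearMap.adjoint (A i) Uv, xstar i⟫ := by
      intro i t
      set Rf := ∑ j ∈ Finset.univ.erase i, f j (xstar j) with hRf
      set Rg := ∑ j ∈ Finset.univ.erase i, g j (xstar j) with hRg
      set Ra := ∑ j ∈ Finset.univ.erase i, A j (xstar j) with hRa
      have hF : (∑ j, f j (Function.update xstar i t j)) = f i t + Rf :=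
        sum_update_univ (fun j tt => f j tt) xstar i t
      have hFs : (∑ j, f j (xstar j)) = f i (xstar i) + Rf :=
        (Finset.add_sum_erase _ (fun j => f j (xstar j)) (mem_univ i)).symm
      have hGu : Gfun (Function.update xstar i t) = g i t + Rg :=
        sum_update_univ (fun j tt => g j tt) xstar i t
      have hGs : Gfun xstar = g i (xstar i) + Rg :=
        (Finset.add_sum_erase _ (fun j => g j (xstar j)) (mem_univ i)).symm
      have hLu : L (Function.update xstar i t) = A i t + Ra :=
        sum_update_univ (fun j tt => A j tt) xstar i t
      have hLs : L xstar = A i (xstar i) + Ra :=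
        (Finset.add_sum_erase _ (fun j => A j (xstar j)) (mem_univ i)).symm
      have hginner : ∀ (tt : EuclideanSpace ℝ (Fin (d i))),
          ⟪Y, g i tt + Rg⟫ = (∑ l, Y l * g i tt l) + ⟪Y, Rg⟫ := by
        intro tt
        rw [inner_add_right]
        congr 1
        simp only [PiLp.inner_apply, RCLike.inner_apply', conj_trivial]
      have hadj : ∀ (tt : EuclideanSpace ℝ (Fin (d i))),
          ⟪Uv, (A i tt + Ra) - βv⟫
            = ⟪ContinuousLinearMap.adjoint (A i) Uv, tt⟫ + ⟪Uv, Ra - βv⟫ := by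
        intro tt
        rw [add_sub_assoc, inner_add_right, ContinuousLinearMap.adjoint_inner_left]
      have h1 := hLag (Function.update xstar i t)
      rw [hF, hGu, hLu, hginner, hadj] at h1
      have h2 : Fstar = f i (xstar i) + Rf := by rw [hFstar]; exact hFs
      have h3 : (∑ l, Y l * g i (xstar i) l) + ⟪Y, Rg⟫ = 0 := by
        rw [← hginner, ← hGs]; exact hYGxstar
      have h4 : ⟪ContinuousLinearMap.adjoint (A i) Uv, xstar i⟫ + ⟪Uv, Ra - βv⟫ = 0 := by
        rw [← hadj, ← hLs, hLxsub, inner_zero_right]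
      linarith
    -- stationarity decomposition for each i
    have hloc : ∀ i, ∃ (sf : EuclideanSpace ℝ (Fin (d i)))
        (sg : Fin q → EuclideanSpace ℝ (Fin (d i))),
        IsSubgradientAt (f i) sf (xstar i) ∧
        (∀ l, IsSubgradientAt (fun x => g i x l) (sg l) (xstar i)) ∧
        sf + ContinuousLinearMap.adjoint (A i) Uv + ∑ l, Y l • sg l = 0 := by
      intro i
      exact stationarity_decomp (hf i) (fun l => hg i l) hYnn
        (ContinuousLinearMap.adjoint (A i) Uv) (xstar i) (hmin i)
    -- complementarity for each i
    have hcompl : ∀ i, ⟪Y, g i (xstar i) - zstar i⟫ = 0 := by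
      have hle : ∀ i ∈ Finset.univ, ⟪Y, g i (xstar i) - zstar i⟫ ≤ (0:ℝ) := by
        intro i _
        simp only [PiLp.inner_apply, RCLike.inner_apply', conj_trivial]
        refine Finset.sum_nonpos fun l _ => ?_
        have he : (g i (xstar i) - zstar i) l = g i (xstar i) l - zstar i l := rfl
        rw [he]
        exact mul_nonpos_of_nonneg_of_nonpos (hYnn l) (by linarith [hfineq i l])
      have htot : ∑ i, ⟪Y, g i (xstar i) - zstar i⟫ = 0 := by
        rw [← inner_sum, Finset.sum_sub_distrib, hzsum, sub_zero]
        have hGx : Gfun xstar = ∑ i, g i (xstar i) := rfl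
        rw [← hGx]
        exact hYGxstar
      intro i
      exact (Finset.sum_eq_zero_iff_of_nonpos hle).mp htot i (mem_univ i)
    choose sf sg hsf hsg hstat using hloc
    exact ⟨fun _ => Uv, fun _ => Y, fun i => ⟨sf i, sg i, hsf i, hsg i, hstat i⟩,
      fun i => by rw [hfeq i, sub_self], hcompl, fun i l => hYnn l,
      fun i j => rfl, fun i j => rfl, hvsum, hzsum⟩
  · -- reverse direction: KKT implies optimality
    rintro ⟨u, y, hloc, hfeq', hcomp, hynn, hucons, hycons, hv0, hz0⟩ x v z ⟨hxa, hxg, hvs, hzs⟩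
    rcases Nat.eq_zero_or_pos N with hN0 | hN
    · subst hN0; simp
    set i0 : Fin N := ⟨0, hN⟩ with hi0
    set U := u i0 with hU
    set Yc := y i0 with hYc
    choose sf sg hsf hsg hstat using hloc
    have key : ∀ i, f i (xstar i) ≤ f i (x i)
        + (⟪U, A i (x i)⟫ - ⟪U, A i (xstar i)⟫)
        + (⟪Yc, g i (x i)⟫ - ⟪Yc, g i (xstar i)⟫) := by
      intro i
      have hui : u i = U := hucons i i0
      have hyi : y i = Yc := hycons i i0
      have h1 := hsf i (x i)
      have h2 : sf i = -(ContinuousLinearMap.adjoint (A i) U) - ∑ l, Yc l • sg i l := by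
        have h3 := hstat i
        rw [hui, hyi] at h3
        have h4 : sf i + ((ContinuousLinearMap.adjoint (A i) U) + ∑ l, Yc l • sg i l) = 0 := by
          rw [← add_assoc]; exact h3
        rw [eq_neg_of_add_eq_zero_left h4, neg_add]
        abel
      have h5 : ⟪sf i, x i - xstar i⟫
          = -⟪ContinuousLinearMap.adjoint (A i) U, x i - xstar i⟫
            - ∑ l, Yc l * ⟪sg i l, x i - xstar i⟫ := by
        have hsum : ⟪∑ l, Yc l • sg i l, x i - xstar i⟫
            = ∑ l, Yc l * ⟪sg i l, x i - xstar i⟫ := by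
          rw [sum_inner]
          exact Finset.sum_congr rfl fun l _ => real_inner_smul_left _ _ _
        rw [h2, inner_sub_left, inner_neg_left, hsum]
      have h6 : ⟪ContinuousLinearMap.adjoint (A i) U, x i - xstar i⟫
          = ⟪U, A i (x i)⟫ - ⟪U, A i (xstar i)⟫ := by
        rw [ContinuousLinearMap.adjoint_inner_left, map_sub, inner_sub_right]
      have h7 : (∑ l, Yc l * ⟪sg i l, x i - xstar i⟫)
          ≤ ⟪Yc, g i (x i)⟫ - ⟪Yc, g i (xstar i)⟫ := by
        have h8 : ⟪Yc, g i (x i)⟫ - ⟪Yc, g i (xstar i)⟫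
            = ∑ l, Yc l * (g i (x i) l - g i (xstar i) l) := by
          simp only [PiLp.inner_apply, RCLike.inner_apply', conj_trivial]
          rw [← Finset.sum_sub_distrib]
          exact Finset.sum_congr rfl fun l _ => by ring
        rw [h8]
        refine Finset.sum_le_sum fun l _ => ?_
        refine mul_le_mul_of_nonneg_left ?_ (by rw [hYc, ← hycons i i0]; exact hynn i l)
        have h9 := hsg i l (x i)
        simp only [ge_iff_le] at h9
        linarith
      rw [h5, h6] at h1
      linarith
    have hsumkey := Finset.sum_le_sum (fun i (_ : i ∈ Finset.univ) => key i)
    rw [Finset.sum_add_distrib, Finset.sum_add_distrib, Finset.sum_sub_distrib,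
      Finset.sum_sub_distrib] at hsumkey
    have hAterm : (∑ i, ⟪U, A i (x i)⟫) - (∑ i, ⟪U, A i (xstar i)⟫) = (0:ℝ) := by
      rw [← inner_sum, ← inner_sum, ← inner_sub_right]
      have hAx : ∑ i, A i (x i) = (∑ i, v i) + ∑ i, b i := by
        rw [← Finset.sum_add_distrib]
        exact Finset.sum_congr rfl fun i _ => by
          have h2 : A i (x i) = v i + b i := by
            rw [← hxa i]; abel
          exact h2
      have hAxs : ∑ i, A i (xstar i) = (∑ i, vstar i) + ∑ i, b i := by
        rw [← Finset.sum_add_distrib]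
        exact Finset.sum_congr rfl fun i _ => by
          have h2 : A i (xstar i) = vstar i + b i := by
            rw [← hfeq i]; abel
          exact h2
      rw [hAx, hAxs, hvs, hvsum]
      simp
    have hgx_le : (∑ i, ⟪Yc, g i (x i)⟫) ≤ 0 := by
      rw [← inner_sum]
      simp only [PiLp.inner_apply, RCLike.inner_apply', conj_trivial]
      refine Finset.sum_nonpos fun l _ => ?_
      refine mul_nonpos_of_nonneg_of_nonpos (by rw [hYc]; exact hynn i0 l) ?_
      have h1 : (∑ i, g i (x i)) l = ∑ i, g i (x i) l := by rw [WithLp.ofLp_sum, Finset.sum_apply]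
      rw [h1]
      calc (∑ i, g i (x i) l) ≤ ∑ i, z i l := Finset.sum_le_sum fun i _ => hxg i l
        _ = (∑ i, z i) l := by rw [WithLp.ofLp_sum, Finset.sum_apply]
        _ = 0 := by rw [hzs]; rfl
    have hgxs_eq : (∑ i, ⟪Yc, g i (xstar i)⟫) = (0:ℝ) := by
      have h1 : ∀ i, ⟪Yc, g i (xstar i)⟫ = ⟪Yc, zstar i⟫ := by
        intro i
        have h2 := hcomp i
        rw [hycons i i0, ← hYc] at h2
        have h3 : ⟪Yc, g i (xstar i) - zstar i⟫
            = ⟪Yc, g i (xstar i)⟫ - ⟪Yc, zstar i⟫ := inner_sub_right _ _ _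
        rw [h3] at h2
        linarith
      rw [Finset.sum_congr rfl fun i _ => h1 i, ← inner_sum, hzsum, inner_zero_right]
    linarith
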